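/- Suppose positive integers rᵢ, xᵢ, yᵢ (i = 1,2,3) satisfy rᵢ² = 2xᵢyᵢ, together with the cyclic gluing relations r₁+x₁ = r₃+y₃, r₂+x₂ = r₃+x₃, and r₁+y₁ = r₂+y₂. If additionally r₁+x₁ = r₂+x₂ (symmetric closure), then a contradiction follows; i.e., no such configuration exists. -/

import Mathlib

theorem stmt_11 (r₁ x₁ y₁ r₂ x₂ y₂ r₃ x₃ y₃ : ℤ)
    (hr₁ : 0 < r₁) (hx₁ : 0 < x₁) (hy₁ : 0 < y₁)
    (hr₂ : 0 < r₂) (hx₂ : 0 < x₂) (hy₂ : 0 < y₂)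
    (hr₃ : 0 < r₃) (hx₃ : 0 < x₃) (hy₃ : 0 < y₃)
    (h1 : r₁ ^ 2 = 2 * (x₁ * y₁)) (h2 : r₂ ^ 2 = 2 * (x₂ * y₂))
    (h3 : r₃ ^ 2 = 2 * (x₃ * y₃))
    (e1 : r₁ + x₁ = r₃ + y₃) (e2 : r₂ + x₂ = r₃ + x₃)
    (e3 : r₁ + y₁ = r₂ + y₂)
    (sym : r₁ + x₁ = r₂ + x₂) :
    False := by
  have hxy : x₃ = y₃ := by omega
  have h : r₃ ^ 2 = 2 * x₃ ^ 2 := by rw [h3, hxy]; ring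
  -- real sqrt 2 rational contradiction
  have hR : ((r₃ : ℝ) / (x₃ : ℝ)) ^ 2 = 2 := by
    have hx : (x₃ : ℝ) ≠ 0 := by positivity
    field_simp
    exact_mod_cast h.trans (mul_comm _ _)
  have hpos : 0 ≤ (r₃ : ℝ) / (x₃ : ℝ) := by positivity
  have hs : Real.sqrt 2 = (r₃ : ℝ) / (x₃ : ℝ) := by
    rw [← hR, Real.sqrt_sq hpos]
  have : Irrational ((r₃ : ℝ) / (x₃ : ℝ)) := hs ▸ irrational_sqrt_two
  exact this ⟨(r₃ : ℚ) / (x₃ : ℚ), by push_cast; ring⟩
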